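/- Let ν be a probability measure on ℝ^d with log-Laplace L, let (K_n) be a nondecreasing sequence of compact sets whose union is ℝ^d, and let L_n be the log-Laplace of the conditioned measure ν(·|K_n). Then for every λ ∈ ℝ^d and every sequence λ_n → λ, one has liminf_n L_n(λ_n) ≥ L(λ); moreover lim_n L_n(λ) = L(λ). In particular (L_n) Mosco converges to L. -/

import Mathlib

open MeasureTheory ENNReal Filter Topology
open scoped RealInnerProductSpace

/-- The log-Laplace transform of a measure on `ℝ^d`, with values in `EReal`
(so that it equals `+∞` when the integral is infinite). -/
noncomputable def logLaplace {d : ℕ} (ν : Measure (EuclideanSpace ℝ (Fin d)))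
    (l : EuclideanSpace ℝ (Fin d)) : EReal :=
  ENNReal.log (∫⁻ z, ENNReal.ofReal (Real.exp ⟪l, z⟫) ∂ν)

theorem mosco_convergence_of_conditioned_logLaplace {d : ℕ}
    (ν : Measure (EuclideanSpace ℝ (Fin d))) [IsProbabilityMeasure ν]
    (K : ℕ → Set (EuclideanSpace ℝ (Fin d))) (hK : ∀ n, IsCompact (K n))
    (hmono : Monotone K) (hunion : (⋃ n, K n) = Set.univ) :
    (∀ (l : EuclideanSpace ℝ (Fin d)) (ls : ℕ → EuclideanSpace ℝ (Fin d)),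
        Tendsto ls atTop (𝓝 l) →
        logLaplace ν l ≤ liminf (fun n => logLaplace (ProbabilityTheory.cond ν (K n)) (ls n)) atTop) ∧
    (∀ l : EuclideanSpace ℝ (Fin d),
        Tendsto (fun n => logLaplace (ProbabilityTheory.cond ν (K n)) l) atTop (𝓝 (logLaplace ν l))) := by
  set F : EuclideanSpace ℝ (Fin d) → EuclideanSpace ℝ (Fin d) → ℝ≥0∞ := fun l z => ENNReal.ofReal (Real.exp ⟪l, z⟫) with hF
  have hFc : ∀ z : EuclideanSpace ℝ (Fin d), Continuous fun x : EuclideanSpace ℝ (Fin d) => F x z := fun z =>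
    ENNReal.continuous_ofReal.comp (Real.continuous_exp.comp (continuous_id.inner continuous_const))
  have hFm : ∀ l : EuclideanSpace ℝ (Fin d), Measurable (F l) := fun l =>
    (ENNReal.continuous_ofReal.comp
      (Real.continuous_exp.comp (continuous_const.inner continuous_id))).measurable
  -- rewrite the conditioned log-Laplace
  have hcond : ∀ (n : ℕ) (l : EuclideanSpace ℝ (Fin d)),
      logLaplace (ProbabilityTheory.cond ν (K n)) l
        = ENNReal.log ((ν (K n))⁻¹ * ∫⁻ z in K n, F l z ∂ν) := by
    intro n l
    simp only [logLaplace, ProbabilityTheory.cond, lintegral_smul_measure, hF, smul_eq_mul]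
  -- supremum over m of the truncated integrals is the full integral
  have hsup : ∀ l : EuclideanSpace ℝ (Fin d), (⨆ m, ∫⁻ z in K m, F l z ∂ν) = ∫⁻ z, F l z ∂ν := by
    intro l
    calc (⨆ m, ∫⁻ z in K m, F l z ∂ν)
        = ⨆ m, ∫⁻ z, (K m).indicator (F l) z ∂ν := by
          simp_rw [← lintegral_indicator (hK _).measurableSet]
      _ = ∫⁻ z, ⨆ m, (K m).indicator (F l) z ∂ν :=
          (lintegral_iSup (fun m => (hFm l).indicator (hK m).measurableSet)
            (fun i j hij =>
              Set.indicator_le_indicator_of_subset (hmono hij) (fun z => zero_le))).symm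
      _ = ∫⁻ z, F l z ∂ν := by
          congr 1; funext z
          obtain ⟨m, hm⟩ : ∃ m, z ∈ K m := by
            have hz : z ∈ ⋃ n, K n := by rw [hunion]; trivial
            simpa using hz
          refine le_antisymm (iSup_le fun m => Set.indicator_le_self _ _ z) ?_
          exact le_iSup_of_le m (by simp [Set.indicator_of_mem hm])
  have hinvone : ∀ n, (1 : ℝ≥0∞) ≤ (ν (K n))⁻¹ := fun n =>
    ENNReal.one_le_inv.2 prob_le_one
  constructor
  · -- liminf inequality along a converging sequence
    intro l ls hls
    have key : (∫⁻ z, F l z ∂ν)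
        ≤ liminf (fun n => (ν (K n))⁻¹ * ∫⁻ z in K n, F (ls n) z ∂ν) atTop := by
      rw [← hsup l]
      refine iSup_le fun m => ?_
      have step1 : (∫⁻ z in K m, F l z ∂ν)
          ≤ liminf (fun n => ∫⁻ z in K m, F (ls n) z ∂ν) atTop := by
        refine le_trans ?_ (lintegral_liminf_le (fun n => hFm (ls n)))
        refine lintegral_mono fun z => ?_
        have ht : Tendsto (fun n => F (ls n) z) atTop (𝓝 (F l z)) :=
          ((hFc z).tendsto l).comp hls
        rw [ht.liminf_eq]
      have step2 : liminf (fun n => ∫⁻ z in K m, F (ls n) z ∂ν) atTop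
          ≤ liminf (fun n => (ν (K n))⁻¹ * ∫⁻ z in K n, F (ls n) z ∂ν) atTop := by
        refine liminf_le_liminf ?_
        filter_upwards [eventually_ge_atTop m] with n hn
        calc (∫⁻ z in K m, F (ls n) z ∂ν)
            ≤ ∫⁻ z in K n, F (ls n) z ∂ν := lintegral_mono_set (hmono hn)
          _ ≤ (ν (K n))⁻¹ * ∫⁻ z in K n, F (ls n) z ∂ν := by
              nth_rewrite 1 [← one_mul (∫⁻ z in K n, F (ls n) z ∂ν)]
              exact mul_le_mul_left (hinvone n) _
      exact step1.trans step2
    have hmap := (ENNReal.logOrderIso.liminf_apply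
      (u := fun n => (ν (K n))⁻¹ * ∫⁻ z in K n, F (ls n) z ∂ν) (f := atTop))
    simp only [ENNReal.logOrderIso_apply] at hmap
    calc logLaplace ν l
        = ENNReal.log (∫⁻ z, F l z ∂ν) := rfl
      _ ≤ ENNReal.log (liminf (fun n => (ν (K n))⁻¹ * ∫⁻ z in K n, F (ls n) z ∂ν) atTop) :=
          ENNReal.log_monotone key
      _ = liminf (fun n => ENNReal.log ((ν (K n))⁻¹ * ∫⁻ z in K n, F (ls n) z ∂ν)) atTop := hmap
      _ = liminf (fun n => logLaplace (ProbabilityTheory.cond ν (K n)) (ls n)) atTop := by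
          simp_rw [hcond]
  · -- pointwise convergence
    intro l
    have hνK : Tendsto (fun n => ν (K n)) atTop (𝓝 1) := by
      have := tendsto_measure_iUnion_atTop (μ := ν) hmono
      rwa [hunion, measure_univ] at this
    have hinv : Tendsto (fun n => (ν (K n))⁻¹) atTop (𝓝 1) := by
      simpa using ENNReal.tendsto_inv_iff.2 hνK
    have hI : Tendsto (fun n => ∫⁻ z in K n, F l z ∂ν) atTop (𝓝 (∫⁻ z, F l z ∂ν)) := by
      rw [← hsup l]
      exact tendsto_atTop_iSup (fun i j hij => lintegral_mono_set (hmono hij))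
    have hmul : Tendsto (fun n => (ν (K n))⁻¹ * ∫⁻ z in K n, F l z ∂ν) atTop
        (𝓝 (∫⁻ z, F l z ∂ν)) := by
      have := ENNReal.Tendsto.mul hinv (Or.inl one_ne_zero) hI (Or.inr ENNReal.one_ne_top)
      simpa using this
    have := (ENNReal.continuous_log.tendsto _).comp hmul
    simp only [Function.comp_def] at this
    simp_rw [hcond]
    exact this
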